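/- arXiv:2209.12540 — 2 statements merged into one kernel-verified Lean document; each statement's English description precedes it below -/
import Mathlib

section
/- For a finite real reflection group W with Coxeter element c, the map w ↦ c_+ w c_- is an involutive anti-automorphism of the noncrossing partition lattice NC(W,c), where c = c_+ c_- is a bipartite factorization of the Coxeter element. -/
namespace Stmt4

variable {W : Type*} [Group W] {n : ℕ} {M : CoxeterMatrix (Fin n)} (cs : CoxeterSystem M W)

/-- The reflection length `ℓ_T(w)`: the least number of reflections needed to write `w`. -/
noncomputable def reflLen (w : W) : ℕ :=
  sInf {k | ∃ l : List W, l.length = k ∧ (∀ t ∈ l, cs.IsReflection t) ∧ l.prod = w}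

/-- The absolute order: `u ≤ v` iff `ℓ_T(u) + ℓ_T(u⁻¹ v) = ℓ_T(v)`. -/
def absLe (u v : W) : Prop := reflLen cs u + reflLen cs (u⁻¹ * v) = reflLen cs v

lemma reflSet_nonempty (w : W) :
    {k | ∃ l : List W, l.length = k ∧ (∀ t ∈ l, cs.IsReflection t) ∧ l.prod = w}.Nonempty := by
  obtain ⟨ω, rfl⟩ := cs.wordProd_surjective w
  refine ⟨ω.length, ω.map cs.simple, by simp, ?_, rfl⟩
  intro t ht
  obtain ⟨i, _, rfl⟩ := List.mem_map.mp ht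
  exact cs.isReflection_simple i

lemma reflLen_spec (w : W) : ∃ l : List W, l.length = reflLen cs w ∧
    (∀ t ∈ l, cs.IsReflection t) ∧ l.prod = w :=
  Nat.sInf_mem (reflSet_nonempty cs w)

lemma reflLen_le {w : W} {l : List W} (hl : ∀ t ∈ l, cs.IsReflection t) (hp : l.prod = w) :
    reflLen cs w ≤ l.length :=
  Nat.sInf_le ⟨l, rfl, hl, hp⟩

lemma reflLen_mul_le (u v : W) : reflLen cs (u * v) ≤ reflLen cs u + reflLen cs v := by
  obtain ⟨l₁, h₁, hr₁, hp₁⟩ := reflLen_spec cs u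
  obtain ⟨l₂, h₂, hr₂, hp₂⟩ := reflLen_spec cs v
  have := reflLen_le cs (l := l₁ ++ l₂) (w := u * v)
    (by intro t ht; rcases List.mem_append.mp ht with h | h; exacts [hr₁ t h, hr₂ t h])
    (by rw [List.prod_append, hp₁, hp₂])
  simpa [h₁, h₂] using this

private lemma prod_reverse_of_invol : ∀ l : List W, (∀ t ∈ l, t * t = 1) →
    l.reverse.prod = l.prod⁻¹ := by
  intro l
  induction l with
  | nil => simp
  | cons a l ih =>
    intro h
    have ha : a⁻¹ = a := inv_eq_of_mul_eq_one_right (h a (by simp))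
    simp only [List.reverse_cons, List.prod_append, List.prod_cons, List.prod_nil, mul_one,
      mul_inv_rev, ha]
    rw [ih fun t ht => h t (by simp [ht])]

lemma reflLen_inv_le (w : W) : reflLen cs w⁻¹ ≤ reflLen cs w := by
  obtain ⟨l, h, hr, hp⟩ := reflLen_spec cs w
  have := reflLen_le cs (l := l.reverse) (w := w⁻¹)
    (by intro t ht; exact hr t (List.mem_reverse.mp ht))
    (by rw [prod_reverse_of_invol l fun t ht => (hr t ht).mul_self, hp])
  simpa [h] using this

lemma reflLen_inv (w : W) : reflLen cs w⁻¹ = reflLen cs w :=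
  le_antisymm (reflLen_inv_le cs w) (by simpa using reflLen_inv_le cs w⁻¹)

lemma reflLen_conj (x w : W) : reflLen cs (x * w * x⁻¹) = reflLen cs w := by
  have key : ∀ y v : W, reflLen cs (y * v * y⁻¹) ≤ reflLen cs v := by
    intro y v
    obtain ⟨l, h, hr, hp⟩ := reflLen_spec cs v
    have hprod : ∀ m : List W, (m.map fun t => y * t * y⁻¹).prod = y * m.prod * y⁻¹ := by
      intro m
      induction m with
      | nil => simp
      | cons a m ih => simp only [List.map_cons, List.prod_cons, ih]; group
    have := reflLen_le cs (l := l.map fun t => y * t * y⁻¹) (w := y * v * y⁻¹)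
      (by intro t ht; obtain ⟨a, ha, rfl⟩ := List.mem_map.mp ht; exact (hr a ha).conj y)
      (by rw [hprod, hp])
    simpa [h] using this
  refine le_antisymm (key x w) ?_
  have := key x⁻¹ (x * w * x⁻¹)
  simpa [mul_assoc] using this

/-- Let `W` be a finite Coxeter group (= finite real reflection group) whose simple system
`S` is partitioned as `S = S₊ ⊎ S₋` (recorded by `P`), each part consisting of pairwise
commuting simple reflections (`M i j = 2`), and let `c₊`, `c₋` be the products of the two
parts and `c = c₊ c₋` the bipartite Coxeter element.  Then `w ↦ c₊ w c₋` is an involutive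
anti-automorphism of the noncrossing partition lattice `NC(W,c) = {w : w ≤ c}` (absolute
order): it maps `NC(W,c)` to itself, is an involution on it, and reverses the absolute
order. -/
theorem stmt_4 [Finite W] (P : Fin n → Bool)
    (hbip : ∀ i j : Fin n, i ≠ j → P i = P j → M i j = 2)
    (cp cm c : W)
    (hcp : cp = cs.wordProd ((List.finRange n).filter (fun i => P i)))
    (hcm : cm = cs.wordProd ((List.finRange n).filter (fun i => !P i)))
    (hc : c = cp * cm) :
    (∀ w : W, absLe cs w c → absLe cs (cp * w * cm) c) ∧
    (∀ w : W, absLe cs w c → cp * (cp * w * cm) * cm = w) ∧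
    (∀ u v : W, absLe cs u c → absLe cs v c → absLe cs u v →
      absLe cs (cp * v * cm) (cp * u * cm)) := by
  have hcomm : ∀ i j : Fin n, P i = P j → Commute (cs.simple i) (cs.simple j) := by
    intro i j hP
    rcases eq_or_ne i j with rfl | hne
    · exact Commute.refl _
    · have hM := hbip i j hne hP
      have := cs.simple_mul_simple_pow i j
      rw [hM, pow_two] at this
      have h1 : cs.simple i * cs.simple j = (cs.simple i * cs.simple j)⁻¹ :=
        eq_inv_of_mul_eq_one_left this
      rw [mul_inv_rev, cs.inv_simple, cs.inv_simple] at h1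
      exact h1
  have hsq : ∀ l : List (Fin n), (∀ i ∈ l, ∀ j ∈ l, Commute (cs.simple i) (cs.simple j)) →
      cs.wordProd l * cs.wordProd l = 1 := by
    intro l
    induction l with
    | nil => intro _; simp
    | cons a l ih =>
      intro h
      have hc1 : Commute (cs.simple a) (cs.wordProd l) := by
        rw [CoxeterSystem.wordProd]
        apply Commute.list_prod_right
        intro x hx
        obtain ⟨j, hj, rfl⟩ := List.mem_map.mp hx
        exact h a (by simp) j (by simp [hj])
      rw [cs.wordProd_cons]
      calc cs.simple a * cs.wordProd l * (cs.simple a * cs.wordProd l)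
          = cs.simple a * (cs.wordProd l * cs.simple a * cs.wordProd l) := by group
        _ = cs.simple a * (cs.simple a * cs.wordProd l * cs.wordProd l) := by rw [← hc1.eq]
        _ = cs.simple a * (cs.simple a * (cs.wordProd l * cs.wordProd l)) := by group
        _ = cs.wordProd l * cs.wordProd l := cs.simple_mul_simple_cancel_left a
        _ = 1 := ih fun i hi j hj => h i (by simp [hi]) j (by simp [hj])
  have hcp2 : cp * cp = 1 := by
    rw [hcp]
    apply hsq
    intro i hi j hj
    rw [List.mem_filter] at hi hj
    exact hcomm i j (by rw [hi.2, hj.2])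
  have hcm2 : cm * cm = 1 := by
    rw [hcm]
    apply hsq
    intro i hi j hj
    rw [List.mem_filter] at hi hj
    have hi' := hi.2; have hj' := hj.2
    rw [Bool.not_eq_true'] at hi' hj'
    exact hcomm i j (by rw [hi', hj'])
  have hcpinv : cp⁻¹ = cp := inv_eq_of_mul_eq_one_right hcp2
  have hcminv : cm⁻¹ = cm := inv_eq_of_mul_eq_one_right hcm2
  have hcpl : ∀ x : W, cp * (cp * x) = x := fun x => by
    rw [← mul_assoc, hcp2, one_mul]
  have hcml : ∀ x : W, cm * (cm * x) = x := fun x => by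
    rw [← mul_assoc, hcm2, one_mul]
  -- key length computations
  have hlen_phi : ∀ w : W, reflLen cs (cp * w * cm) = reflLen cs (w⁻¹ * c) := by
    intro w
    have h1 : (cm * (w⁻¹ * c) * cm⁻¹)⁻¹ = cp * w * cm := by
      rw [hc]
      simp only [mul_inv_rev, inv_inv, hcpinv, hcminv, mul_assoc, hcpl, hcml, hcp2, hcm2,
        mul_one, one_mul]
    rw [← h1, reflLen_inv, reflLen_conj]
  refine ⟨?_, ?_, ?_⟩
  · intro w hw
    unfold absLe at hw ⊢
    rw [hlen_phi w]
    have h2 : (cp * w * cm)⁻¹ * c = (cm * w * cm⁻¹)⁻¹ := by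
      rw [hc]
      simp only [mul_inv_rev, inv_inv, hcpinv, hcminv, mul_assoc, hcpl, hcml, hcp2, hcm2,
        mul_one, one_mul]
    rw [h2, reflLen_inv, reflLen_conj]
    omega
  · intro w _
    rw [show cp * (cp * w * cm) * cm = cp * (cp * (w * (cm * cm))) by group, hcm2, mul_one, hcpl]
  · intro u v hu hv huv
    unfold absLe at hu hv huv ⊢
    rw [hlen_phi v, hlen_phi u]
    have h2 : (cp * v * cm)⁻¹ * (cp * u * cm) = (cm * (v⁻¹ * u) * cm⁻¹)⁻¹⁻¹ := by
      simp only [mul_inv_rev, inv_inv, hcpinv, hcminv, mul_assoc, hcpl, hcml, hcp2, hcm2,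
        mul_one, one_mul]
    rw [h2, reflLen_inv, reflLen_inv, reflLen_conj]
    have hvu : reflLen cs (u⁻¹ * v) = reflLen cs (v⁻¹ * u) := by
      rw [← reflLen_inv cs (v⁻¹ * u)]; congr 1; group
    rw [← hvu]
    omega

end Stmt4
end

section
/- Let W be an irreducible finite real reflection group acting on V, X ∈ L(W) a flat, w ∈ W with Z = Fix(w), and let χ be a class function on the parabolic subgroup W_X that depends only on the flat Fix(·) (i.e., χ(u) depends only on Fix(u) ∩ X-relative data). Then the induced character evaluates as (Ind_{W_X}^W χ)(w) = [N(W_X):W_X] · ∑_{Y ∈ L(W), Y ∼ X, Y ⊆ Z} χ_Y(w), where χ_Y is the corresponding function on W_Y transported by any group element carrying X to Y, N(W_X) is the normalizer of W_X in W, and Y ∼ X means Y and X are in the same W-orbit. -/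
set_option linter.unusedSectionVars false
set_option linter.unusedVariables false
set_option maxHeartbeats 1000000


namespace Stmt13

variable {V : Type*} [NormedAddCommGroup V] [InnerProductSpace ℝ V] [FiniteDimensional ℝ V]

/-- The orthogonal reflection of `V` in the hyperplane orthogonal to `a`. -/
noncomputable def hypRefl (a : V) : V ≃ₗᵢ[ℝ] V := Submodule.reflection ((ℝ ∙ a)ᗮ)

/-- The fixed subspace `Fix(g) = ker(g − I)`. -/
noncomputable def fixS (g : V ≃ₗᵢ[ℝ] V) : Submodule ℝ V :=
  LinearMap.ker (g.toLinearEquiv.toLinearMap - (LinearMap.id : V →ₗ[ℝ] V))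

lemma mem_fixS {g : V ≃ₗᵢ[ℝ] V} {v : V} : v ∈ fixS g ↔ g v = v := by
  simp [fixS, LinearMap.mem_ker, sub_eq_zero]

lemma mem_map' {g : V ≃ₗᵢ[ℝ] V} {X : Submodule ℝ V} {v : V} :
    v ∈ X.map g.toLinearEquiv.toLinearMap ↔ ∃ u ∈ X, g u = v := by
  rw [Submodule.mem_map]
  constructor
  · rintro ⟨u, hu, hu2⟩; exact ⟨u, hu, hu2⟩
  · rintro ⟨u, hu, hu2⟩; exact ⟨u, hu, hu2⟩

lemma mul_apply' (a b : V ≃ₗᵢ[ℝ] V) (v : V) : (a * b) v = a (b v) := rfl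

lemma map_mul' (a b : V ≃ₗᵢ[ℝ] V) (X : Submodule ℝ V) :
    X.map (a * b).toLinearEquiv.toLinearMap
      = (X.map b.toLinearEquiv.toLinearMap).map a.toLinearEquiv.toLinearMap := by
  ext v
  simp only [mem_map']
  constructor
  · rintro ⟨u, hu, rfl⟩; exact ⟨b u, ⟨u, hu, rfl⟩, rfl⟩
  · rintro ⟨u, ⟨u', hu', rfl⟩, rfl⟩; exact ⟨u', hu', rfl⟩

lemma map_inv' {a : V ≃ₗᵢ[ℝ] V} {X Y : Submodule ℝ V}
    (h : X.map a.toLinearEquiv.toLinearMap = Y) :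
    Y.map a⁻¹.toLinearEquiv.toLinearMap = X := by
  subst h
  ext v
  simp only [mem_map']
  constructor
  · rintro ⟨u, ⟨u', hu', rfl⟩, rfl⟩
    simpa [show a⁻¹ (a u') = u' from a.symm_apply_apply u'] using hu'
  · intro hv
    exact ⟨a v, ⟨v, hv, rfl⟩, a.symm_apply_apply v⟩

lemma le_fix_conj {x w : V ≃ₗᵢ[ℝ] V} {X : Submodule ℝ V} :
    X ≤ fixS (x⁻¹ * w * x) ↔ X.map x.toLinearEquiv.toLinearMap ≤ fixS w := by
  constructor
  · intro h v hv
    rw [mem_map'] at hv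
    obtain ⟨u, hu, rfl⟩ := hv
    have h2 := mem_fixS.mp (h hu)
    rw [mem_fixS]
    have : x ((x⁻¹ * w * x) u) = x u := by rw [h2]
    simpa [mul_apply', show ∀ z, x (x⁻¹ z) = z from fun z => x.apply_symm_apply z] using this
  · intro h v hv
    rw [mem_fixS]
    have : w (x v) = x v := mem_fixS.mp (h (mem_map'.mpr ⟨v, hv, rfl⟩))
    show x⁻¹ (w (x v)) = v
    rw [this]; exact x.symm_apply_apply v

lemma map_of_le_fix {g : V ≃ₗᵢ[ℝ] V} {X : Submodule ℝ V} (h : X ≤ fixS g) :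
    X.map g.toLinearEquiv.toLinearMap = X := by
  ext v
  rw [mem_map']
  constructor
  · rintro ⟨u, hu, rfl⟩
    rwa [mem_fixS.mp (h hu)]
  · intro hv
    exact ⟨v, hv, mem_fixS.mp (h hv)⟩


open Classical in
/-- Let `W` be a finite real reflection group on `V`, `X ∈ L(W)` a flat, `w ∈ W` with
`Z = Fix(w)`, and `χ` a class function on the parabolic subgroup
`W_X = {g ∈ W : X ⊆ Fix(g)}` depending only on the flat `Fix(·)` and invariant under
conjugation by the stabilizer of `X`.  Then the induced character evaluates as
`(Ind_{W_X}^W χ)(w) = [N(W_X):W_X] · ∑_{Y ∈ L(W), Y ∼ X, Y ⊆ Z} χ_Y(w)`, where `χ_Y` is the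
transport of `χ` by any group element `τ Y ∈ W` carrying `X` to `Y`, `N(W_X)` is the
normalizer of `W_X` in `W` (= the setwise stabilizer of `X`), and `Y ∼ X` means that `Y` and
`X` are in the same `W`-orbit. -/
theorem stmt_13 (W : Subgroup (V ≃ₗᵢ[ℝ] V)) [Finite W]
    (hgen : W = Subgroup.closure
      {g : V ≃ₗᵢ[ℝ] V | g ∈ W ∧ ∃ a : V, a ≠ 0 ∧ g = hypRefl a})
    (X : Submodule ℝ V) (hX : ∃ g ∈ W, fixS g = X)
    (χ : (V ≃ₗᵢ[ℝ] V) → ℂ)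
    (hflat : ∀ u₁ u₂ : V ≃ₗᵢ[ℝ] V, u₁ ∈ W → u₂ ∈ W → fixS u₁ = fixS u₂ → χ u₁ = χ u₂)
    (hχ : ∀ y : V ≃ₗᵢ[ℝ] V, y ∈ W → X.map y.toLinearEquiv.toLinearMap = X →
      ∀ u : V ≃ₗᵢ[ℝ] V, χ (y⁻¹ * u * y) = χ u)
    (w : V ≃ₗᵢ[ℝ] V) (hw : w ∈ W)
    (τ : Submodule ℝ V → (V ≃ₗᵢ[ℝ] V))
    (hτ : ∀ Y : Submodule ℝ V, (∃ y ∈ W, X.map y.toLinearEquiv.toLinearMap = Y) →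
      τ Y ∈ W ∧ X.map (τ Y).toLinearEquiv.toLinearMap = Y) :
    (Nat.card {g : V ≃ₗᵢ[ℝ] V | g ∈ W ∧ X ≤ fixS g} : ℂ)⁻¹ *
        ∑ᶠ x ∈ (W : Set (V ≃ₗᵢ[ℝ] V)),
          (if x⁻¹ * w * x ∈ W ∧ X ≤ fixS (x⁻¹ * w * x) then χ (x⁻¹ * w * x) else 0)
      = ((Nat.card {g : V ≃ₗᵢ[ℝ] V | g ∈ W ∧ X.map g.toLinearEquiv.toLinearMap = X} /
            Nat.card {g : V ≃ₗᵢ[ℝ] V | g ∈ W ∧ X ≤ fixS g} : ℕ) : ℂ) *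
          ∑ᶠ Y ∈ {Y : Submodule ℝ V |
              (∃ y ∈ W, X.map y.toLinearEquiv.toLinearMap = Y) ∧ Y ≤ fixS w},
            χ ((τ Y)⁻¹ * w * τ Y) := by
  classical
  set P : Set (V ≃ₗᵢ[ℝ] V) := {g : V ≃ₗᵢ[ℝ] V | g ∈ W ∧ X ≤ fixS g} with hP
  set N : Set (V ≃ₗᵢ[ℝ] V) :=
    {g : V ≃ₗᵢ[ℝ] V | g ∈ W ∧ X.map g.toLinearEquiv.toLinearMap = X} with hN
  -- finiteness
  have hWfin : (W : Set (V ≃ₗᵢ[ℝ] V)).Finite := Set.toFinite _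
  have hPfin : P.Finite := hWfin.subset fun g hg => hg.1
  have hNfin : N.Finite := hWfin.subset fun g hg => hg.1
  -- subgroups
  have hPmul : ∀ {a b : V ≃ₗᵢ[ℝ] V}, a ∈ P → b ∈ P → a * b ∈ P := by
    rintro a b ⟨haW, haF⟩ ⟨hbW, hbF⟩
    refine ⟨mul_mem haW hbW, fun v hv => ?_⟩
    rw [mem_fixS, mul_apply', mem_fixS.mp (hbF hv), mem_fixS.mp (haF hv)]
  have hPinv : ∀ {a : V ≃ₗᵢ[ℝ] V}, a ∈ P → a⁻¹ ∈ P := by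
    rintro a ⟨haW, haF⟩
    refine ⟨inv_mem haW, fun v hv => ?_⟩
    rw [mem_fixS]
    have : a⁻¹ (a v) = v := a.symm_apply_apply v
    rwa [mem_fixS.mp (haF hv)] at this
  have hNmul : ∀ {a b : V ≃ₗᵢ[ℝ] V}, a ∈ N → b ∈ N → a * b ∈ N := by
    rintro a b ⟨haW, haM⟩ ⟨hbW, hbM⟩
    exact ⟨mul_mem haW hbW, by rw [map_mul', hbM, haM]⟩
  have hNinv : ∀ {a : V ≃ₗᵢ[ℝ] V}, a ∈ N → a⁻¹ ∈ N := by
    rintro a ⟨haW, haM⟩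
    exact ⟨inv_mem haW, map_inv' haM⟩
  have hPN : P ⊆ N := fun g hg => ⟨hg.1, map_of_le_fix hg.2⟩
  -- P, N as subgroups, divisibility
  let Psub : Subgroup (V ≃ₗᵢ[ℝ] V) :=
    { carrier := P
      one_mem' := ⟨one_mem W, fun v hv => mem_fixS.mpr rfl⟩
      mul_mem' := hPmul
      inv_mem' := hPinv }
  let Nsub : Subgroup (V ≃ₗᵢ[ℝ] V) :=
    { carrier := N
      one_mem' := ⟨one_mem W, by
        ext v
        rw [mem_map']
        exact ⟨fun ⟨u, hu, h⟩ => h ▸ hu, fun hv => ⟨v, hv, rfl⟩⟩⟩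
      mul_mem' := hNmul
      inv_mem' := hNinv }
  have hdvd : Nat.card P ∣ Nat.card N :=
    Subgroup.card_dvd_of_le (show Psub ≤ Nsub from hPN)
  have hPpos : (0 : ℕ) < Nat.card P := by
    have : Nonempty P := ⟨⟨1, Psub.one_mem⟩⟩
    have : Finite P := hPfin
    exact Nat.card_pos
  -- rewrite finsums as finset sums
  have horbfin : {Y : Submodule ℝ V |
      ∃ y ∈ W, X.map y.toLinearEquiv.toLinearMap = Y}.Finite := by
    have : {Y : Submodule ℝ V | ∃ y ∈ W, X.map y.toLinearEquiv.toLinearMap = Y}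
        ⊆ (fun x : V ≃ₗᵢ[ℝ] V => X.map x.toLinearEquiv.toLinearMap) '' (W : Set (V ≃ₗᵢ[ℝ] V)) := by
      rintro Y ⟨y, hy, rfl⟩; exact ⟨y, hy, rfl⟩
    exact (hWfin.image _).subset this
  have hRfin : {Y : Submodule ℝ V |
      (∃ y ∈ W, X.map y.toLinearEquiv.toLinearMap = Y) ∧ Y ≤ fixS w}.Finite :=
    horbfin.subset fun Y hY => hY.1
  rw [finsum_mem_eq_finite_toFinset_sum _ hWfin, finsum_mem_eq_finite_toFinset_sum _ hRfin]
  -- replace summand by composite g ∘ m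
  have hsummand : ∀ x ∈ hWfin.toFinset, (if x⁻¹ * w * x ∈ W ∧ X ≤ fixS (x⁻¹ * w * x)
      then χ (x⁻¹ * w * x) else 0)
      = (fun Y => if Y ≤ fixS w then χ ((τ Y)⁻¹ * w * τ Y) else 0)
        (X.map x.toLinearEquiv.toLinearMap) := by
    intro x hx
    rw [hWfin.mem_toFinset] at hx
    have hcond : (x⁻¹ * w * x ∈ W ∧ X ≤ fixS (x⁻¹ * w * x))
        ↔ X.map x.toLinearEquiv.toLinearMap ≤ fixS w := by
      constructor
      · rintro ⟨-, h⟩; exact le_fix_conj.mp h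
      · intro h; exact ⟨mul_mem (mul_mem (inv_mem hx) hw) hx, le_fix_conj.mpr h⟩
    by_cases h : X.map x.toLinearEquiv.toLinearMap ≤ fixS w
    · simp only [if_pos h, if_pos (hcond.mpr h)]
      have hY : ∃ y ∈ W, X.map y.toLinearEquiv.toLinearMap
          = X.map x.toLinearEquiv.toLinearMap := ⟨x, hx, rfl⟩
      obtain ⟨htW, htM⟩ := hτ (X.map x.toLinearEquiv.toLinearMap) hY
      set t := τ (X.map x.toLinearEquiv.toLinearMap)
      have hyW : t⁻¹ * x ∈ W := mul_mem (inv_mem htW) hx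
      have hyM : X.map (t⁻¹ * x).toLinearEquiv.toLinearMap = X := by
        rw [map_mul']
        exact map_inv' htM
      have hconj := hχ (t⁻¹ * x) hyW hyM (t⁻¹ * w * t)
      have harr : (t⁻¹ * x)⁻¹ * (t⁻¹ * w * t) * (t⁻¹ * x) = x⁻¹ * w * x := by group
      rw [harr] at hconj
      exact hconj
    · simp only [if_neg h, if_neg (fun hc => h (hcond.mp hc))]
  rw [Finset.sum_congr rfl hsummand,
    Finset.sum_comp (fun Y => if Y ≤ fixS w then χ ((τ Y)⁻¹ * w * τ Y) else 0)
      (fun x : V ≃ₗᵢ[ℝ] V => X.map x.toLinearEquiv.toLinearMap)]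
  -- fiber cardinality
  have hfiber : ∀ Y ∈ hWfin.toFinset.image
      (fun x : V ≃ₗᵢ[ℝ] V => X.map x.toLinearEquiv.toLinearMap),
      (hWfin.toFinset.filter
        (fun x => X.map x.toLinearEquiv.toLinearMap = Y)).card = Nat.card N := by
    intro Y hY
    rw [Finset.mem_image] at hY
    obtain ⟨x₀, hx₀, rfl⟩ := hY
    rw [hWfin.mem_toFinset] at hx₀
    have hYo : ∃ y ∈ W, X.map y.toLinearEquiv.toLinearMap
        = X.map x₀.toLinearEquiv.toLinearMap := ⟨x₀, hx₀, rfl⟩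
    obtain ⟨htW, htM⟩ := hτ _ hYo
    set t := τ (X.map x₀.toLinearEquiv.toLinearMap)
    have hfibfin : {x : V ≃ₗᵢ[ℝ] V | x ∈ W ∧ X.map x.toLinearEquiv.toLinearMap
        = X.map x₀.toLinearEquiv.toLinearMap}.Finite := hWfin.subset fun x hx => hx.1
    have h1 : (hWfin.toFinset.filter (fun x => X.map x.toLinearEquiv.toLinearMap
        = X.map x₀.toLinearEquiv.toLinearMap)) = hfibfin.toFinset := by
      ext x
      rw [Finset.mem_filter, hWfin.mem_toFinset, hfibfin.mem_toFinset]
      exact Iff.rfl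
    rw [h1, ← Nat.card_eq_card_finite_toFinset hfibfin]
    refine Nat.card_congr (Equiv.symm ?_)
    refine Equiv.ofBijective
      (fun z => ⟨t * z.1, mul_mem htW z.2.1, by rw [map_mul', z.2.2, htM]⟩) ⟨?_, ?_⟩
    · rintro ⟨z1, hz1⟩ ⟨z2, hz2⟩ hz
      have : t * z1 = t * z2 := congrArg Subtype.val hz
      exact Subtype.ext (mul_left_cancel this)
    · rintro ⟨x, hxW, hxM⟩
      refine ⟨⟨t⁻¹ * x, mul_mem (inv_mem htW) hxW, ?_⟩, Subtype.ext (by group)⟩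
      show X.map (t⁻¹ * x).toLinearEquiv.toLinearMap = X
      rw [map_mul', hxM]
      exact map_inv' htM
  rw [Finset.sum_congr rfl (fun Y hY => by rw [hfiber Y hY])]
  -- collect scalar
  have hsum1 : ∑ Y ∈ hWfin.toFinset.image
        (fun x : V ≃ₗᵢ[ℝ] V => X.map x.toLinearEquiv.toLinearMap),
        Nat.card N • (if Y ≤ fixS w then χ ((τ Y)⁻¹ * w * τ Y) else 0)
      = (Nat.card N : ℂ) * ∑ Y ∈ hWfin.toFinset.image
        (fun x : V ≃ₗᵢ[ℝ] V => X.map x.toLinearEquiv.toLinearMap),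
        (if Y ≤ fixS w then χ ((τ Y)⁻¹ * w * τ Y) else 0) := by
    rw [Finset.mul_sum]
    exact Finset.sum_congr rfl fun Y _ => by rw [nsmul_eq_mul]
  rw [hsum1]
  -- identify the Y-sum with the RHS sum
  have himage : hWfin.toFinset.image
      (fun x : V ≃ₗᵢ[ℝ] V => X.map x.toLinearEquiv.toLinearMap) = horbfin.toFinset := by
    ext Y
    rw [Finset.mem_image, horbfin.mem_toFinset]
    constructor
    · rintro ⟨x, hx, rfl⟩; exact ⟨x, hWfin.mem_toFinset.mp hx, rfl⟩
    · rintro ⟨y, hy, rfl⟩; exact ⟨y, hWfin.mem_toFinset.mpr hy, rfl⟩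
  have hsum2 : ∑ Y ∈ hWfin.toFinset.image
        (fun x : V ≃ₗᵢ[ℝ] V => X.map x.toLinearEquiv.toLinearMap),
        (if Y ≤ fixS w then χ ((τ Y)⁻¹ * w * τ Y) else 0)
      = ∑ Y ∈ hRfin.toFinset, χ ((τ Y)⁻¹ * w * τ Y) := by
    rw [himage]
    rw [show hRfin.toFinset = horbfin.toFinset.filter (fun Y => Y ≤ fixS w) from ?_]
    · rw [Finset.sum_filter]
    · ext Y
      rw [hRfin.mem_toFinset, Finset.mem_filter, horbfin.mem_toFinset]
      exact Iff.rfl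
  rw [hsum2]
  -- final scalar arithmetic
  have hcast : ((Nat.card N / Nat.card P : ℕ) : ℂ) = (Nat.card N : ℂ) / (Nat.card P : ℂ) :=
    Nat.cast_div hdvd (by exact_mod_cast hPpos.ne')
  rw [hcast]
  have hPne : (Nat.card P : ℂ) ≠ 0 := by exact_mod_cast hPpos.ne'
  field_simp

end Stmt13
end
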